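/- Let z₁, …, z_n be unit vectors in ℂ^{k−1} and let J = n⁻¹ Σ_{i=1}^n z_i z_i*. Then a unit vector w maximizes w ↦ n⁻¹ Σ_{i=1}^n ‖w w* − z_i z_i*‖₀² over unit vectors if and only if w is an eigenvector of J for its smallest eigenvalue; if that eigenvalue is simple with unit eigenvector m, the maximizer set is {ζ m : ζ ∈ ℂ, |ζ| = 1}, i.e., the sample VW antimean is α X̄_E = [m] ∈ ℂP^{k−2}. -/

import Mathlib

open Matrix

open Finset
variable {d : ℕ}

lemma sum_smul_dotProduct' (a : Fin d → ℂ) (w : Fin d → Fin d → ℂ) (y : Fin d → ℂ) :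
    (∑ i, a i • w i) ⬝ᵥ y = ∑ i, a i * (w i ⬝ᵥ y) := by
  simp only [dotProduct, Finset.sum_apply, Pi.smul_apply, smul_eq_mul, Finset.sum_mul,
    Finset.mul_sum, mul_assoc]
  rw [Finset.sum_comm]

lemma dotProduct_sum_smul' {ι : Type*} [Fintype ι] (a : ι → ℂ) (w : ι → Fin d → ℂ) (y : Fin d → ℂ) :
    y ⬝ᵥ (∑ i, a i • w i) = ∑ i, a i * (y ⬝ᵥ w i) := by
  simp only [dotProduct, Finset.sum_apply, Pi.smul_apply, smul_eq_mul, Finset.sum_mul,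
    Finset.mul_sum]
  rw [Finset.sum_comm]
  apply Finset.sum_congr rfl; intros; apply Finset.sum_congr rfl; intros; ring

lemma rayleigh_min (hd : 0 < d) (M : Matrix (Fin d) (Fin d) ℂ) (hM : M.IsHermitian) :
    ∃ μ : ℝ, ∃ e0 : Fin d → ℂ, star e0 ⬝ᵥ e0 = 1 ∧ M *ᵥ e0 = (μ : ℂ) • e0 ∧
      (∀ u : Fin d → ℂ, μ * (star u ⬝ᵥ u).re ≤ (star u ⬝ᵥ (M *ᵥ u)).re) ∧
      (∀ u : Fin d → ℂ, (star u ⬝ᵥ (M *ᵥ u)).re = μ * (star u ⬝ᵥ u).re →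
        M *ᵥ u = (μ : ℂ) • u) := by
  haveI : Nonempty (Fin d) := ⟨⟨0, hd⟩⟩
  set B := hM.eigenvectorBasis with hB
  set lam := hM.eigenvalues with hlam
  obtain ⟨i₀, -, hi₀⟩ := Finset.exists_min_image Finset.univ lam ⟨Classical.arbitrary _, Finset.mem_univ _⟩
  set μ := lam i₀ with hμ
  have horth : ∀ i j, star ⇑(B i) ⬝ᵥ ⇑(B j) = if i = j then 1 else 0 := by
    intro i j
    have := orthonormal_iff_ite.mp B.orthonormal i j
    rwa [EuclideanSpace.inner_eq_star_dotProduct, dotProduct_comm] at this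
  have heig : ∀ i, M *ᵥ ⇑(B i) = ((lam i : ℂ)) • ⇑(B i) := by
    intro i
    have := hM.mulVec_eigenvectorBasis i
    rw [this]
    ext j
    simp [Complex.real_smul]
    rfl
  -- decomposition
  have hdecomp : ∀ u : Fin d → ℂ, u = ∑ i, (star ⇑(B i) ⬝ᵥ u) • ⇑(B i) := by
    intro u
    have h := B.sum_repr' ((WithLp.equiv 2 (Fin d → ℂ)).symm u)
    have h2 := congrArg (WithLp.linearEquiv 2 ℂ (Fin d → ℂ)) h
    rw [map_sum] at h2
    simp only [_root_.map_smul] at h2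
    rw [show (WithLp.linearEquiv 2 ℂ (Fin d → ℂ)) ((WithLp.equiv 2 (Fin d → ℂ)).symm u) = u from rfl] at h2
    refine h2.symm.trans (Finset.sum_congr rfl fun i _ => ?_)
    rw [EuclideanSpace.inner_eq_star_dotProduct]
    simp only [Equiv.apply_symm_apply]
    rw [dotProduct_comm]
    rfl
  -- dot product of two expansions
  have hdot : ∀ c f : Fin d → ℂ,
      star (∑ i, c i • ⇑(B i)) ⬝ᵥ (∑ j, f j • ⇑(B j)) = ∑ i, star (c i) * f i := by
    intro c f
    rw [star_sum]
    simp only [star_smul]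
    rw [sum_smul_dotProduct']
    apply Finset.sum_congr rfl
    intro i _
    rw [dotProduct_sum_smul']
    simp only [horth]
    simp [mul_ite, mul_one, mul_zero, Finset.sum_ite_eq]
  have hMsum : ∀ c : Fin d → ℂ,
      M *ᵥ (∑ i, c i • ⇑(B i)) = ∑ i, (c i * (lam i : ℂ)) • ⇑(B i) := by
    intro c
    rw [show M *ᵥ (∑ i, c i • ⇑(B i)) = M.mulVecLin (∑ i, c i • ⇑(B i)) from rfl, map_sum]
    apply Finset.sum_congr rfl
    intro i _
    rw [_root_.map_smul, Matrix.mulVecLin_apply, heig i, smul_smul, mul_comm]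
  have hzz : ∀ z : ℂ, star z * z = (Complex.normSq z : ℂ) := by
    intro z
    rw [Complex.star_def, mul_comm]
    exact Complex.mul_conj z
  have hsq : ∀ c : Fin d → ℂ,
      (star (∑ i, c i • ⇑(B i)) ⬝ᵥ (∑ i, c i • ⇑(B i))).re = ∑ i, Complex.normSq (c i) := by
    intro c
    rw [hdot, Complex.re_sum]
    apply Finset.sum_congr rfl
    intro i _
    rw [hzz, Complex.ofReal_re]
  have hquad : ∀ c : Fin d → ℂ,
      (star (∑ i, c i • ⇑(B i)) ⬝ᵥ (M *ᵥ (∑ i, c i • ⇑(B i)))).re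
        = ∑ i, lam i * Complex.normSq (c i) := by
    intro c
    rw [hMsum, hdot, Complex.re_sum]
    apply Finset.sum_congr rfl
    intro i _
    rw [show star (c i) * (c i * (lam i : ℂ)) = (star (c i) * c i) * (lam i : ℂ) by ring,
      hzz, ← Complex.ofReal_mul, Complex.ofReal_re, mul_comm]
  refine ⟨μ, ⇑(B i₀), ?_, ?_, ?_, ?_⟩
  · rw [horth]; simp
  · exact heig i₀
  · intro u
    obtain ⟨c, hu⟩ : ∃ c : Fin d → ℂ, u = ∑ i, c i • ⇑(B i) := ⟨_, hdecomp u⟩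
    rw [hu, hsq, hquad, Finset.mul_sum]
    apply Finset.sum_le_sum
    intro i _
    exact mul_le_mul_of_nonneg_right (hi₀ i (Finset.mem_univ i)) (Complex.normSq_nonneg _)
  · intro u h
    obtain ⟨c, hu⟩ : ∃ c : Fin d → ℂ, u = ∑ i, c i • ⇑(B i) := ⟨_, hdecomp u⟩
    rw [hu, hsq, hquad] at h
    have hzero : ∀ i ∈ Finset.univ, (lam i - μ) * Complex.normSq (c i) = 0 := by
      rw [← Finset.sum_eq_zero_iff_of_nonneg]
      · have : ∑ i, (lam i - μ) * Complex.normSq (c i)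
            = (∑ i, lam i * Complex.normSq (c i)) - μ * ∑ i, Complex.normSq (c i) := by
          rw [Finset.mul_sum, ← Finset.sum_sub_distrib]
          apply Finset.sum_congr rfl
          intro i _
          ring
        rw [this, h, sub_self]
      · intro i _
        exact mul_nonneg (sub_nonneg.mpr (hi₀ i (Finset.mem_univ i))) (Complex.normSq_nonneg _)
    rw [hu, hMsum, Finset.smul_sum]
    apply Finset.sum_congr rfl
    intro i _
    rcases eq_or_ne (lam i) μ with hlm | hlm
    · rw [hlm, smul_smul, mul_comm]
    · have : Complex.normSq (c i) = 0 := by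
        have := hzero i (Finset.mem_univ i)
        rcases mul_eq_zero.mp this with h' | h'
        · exact absurd (sub_eq_zero.mp h') hlm
        · exact h'
      rw [Complex.normSq_eq_zero.mp this]
      simp

lemma sum_mulVec' {ι : Type*} [Fintype ι] (A : ι → Matrix (Fin d) (Fin d) ℂ) (u : Fin d → ℂ) :
    (∑ i, A i) *ᵥ u = ∑ i, (A i *ᵥ u) := by
  ext j
  simp only [mulVec, dotProduct, Finset.sum_apply, Matrix.sum_apply, Finset.sum_mul]
  rw [Finset.sum_comm]

lemma trace_vmv (a b c e : Fin d → ℂ) :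
    Matrix.trace (vecMulVec a b * vecMulVec c e) = (b ⬝ᵥ c) * (e ⬝ᵥ a) := by
  simp only [Matrix.trace, Matrix.diag, Matrix.mul_apply, vecMulVec_apply, dotProduct,
    Finset.sum_mul, Finset.mul_sum]
  apply Finset.sum_congr rfl; intros
  apply Finset.sum_congr rfl; intros
  ring

lemma vmv_herm (a : Fin d → ℂ) : (vecMulVec a (star a))ᴴ = vecMulVec a (star a) := by
  ext i j
  simp [vecMulVec_apply, mul_comm]

lemma vmv_mulVec (a b u : Fin d → ℂ) : vecMulVec a b *ᵥ u = (b ⬝ᵥ u) • a := by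
  ext i
  simp [mulVec, vecMulVec_apply, dotProduct, Finset.sum_mul, Finset.mul_sum]
  apply Finset.sum_congr rfl; intros
  ring

lemma hzz' : ∀ t : ℂ, star t * t = (Complex.normSq t : ℂ) := by
  intro t
  rw [Complex.star_def, mul_comm]
  exact Complex.mul_conj t

lemma trace_diff (u zz : Fin d → ℂ) (hu : star u ⬝ᵥ u = 1) (hzz : star zz ⬝ᵥ zz = 1) :
    (Matrix.trace ((vecMulVec u (star u) - vecMulVec zz (star zz)) *
       (vecMulVec u (star u) - vecMulVec zz (star zz))ᴴ)).re
    = 2 - 2 * Complex.normSq (star zz ⬝ᵥ u) := by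
  rw [conjTranspose_sub, vmv_herm, vmv_herm, sub_mul, mul_sub, mul_sub,
    trace_sub, trace_sub, trace_sub, trace_vmv, trace_vmv, trace_vmv, trace_vmv, hu, hzz,
    Matrix.star_dotProduct]
  set t := star zz ⬝ᵥ u with ht
  have h3 : t * star t = (Complex.normSq t : ℂ) := by rw [mul_comm]; exact hzz' t
  rw [hzz' t, h3]
  simp [Complex.sub_re, Complex.ofReal_re]
  ring

lemma re_star_dot (v : Fin d → ℂ) : (star v ⬝ᵥ v).re = ∑ i, Complex.normSq (v i) := by
  rw [show star v ⬝ᵥ v = ∑ i, star (v i) * v i from rfl, Complex.re_sum]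
  apply Finset.sum_congr rfl
  intro i _
  rw [hzz', Complex.ofReal_re]

lemma re_star_dot_pos {v : Fin d → ℂ} (hv : v ≠ 0) : 0 < (star v ⬝ᵥ v).re := by
  rw [re_star_dot]
  obtain ⟨i, hi⟩ := Function.ne_iff.mp hv
  exact Finset.sum_pos' (fun j _ => Complex.normSq_nonneg _)
    ⟨i, Finset.mem_univ i, Complex.normSq_pos.mpr hi⟩

/-- Let `z₁, …, zₙ` be unit vectors in `ℂ^{k-1}` and
`J = n⁻¹ Σᵢ zᵢ zᵢ*`. A unit vector `w` maximizes `w ↦ n⁻¹ Σᵢ ‖w w* - zᵢ zᵢ*‖₀²` over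
unit vectors iff `w` is an eigenvector of `J` for its smallest eigenvalue; if that
eigenvalue is simple with unit eigenvector `m`, the maximizer set is
`{ζ • m : |ζ| = 1}`, i.e. the sample VW antimean is `[m] ∈ ℂP^{k-2}`. -/
theorem vw_sample_antimean_complex (k n : ℕ) (hk : 2 ≤ k) (hn : 0 < n)
    (z : Fin n → Fin (k - 1) → ℂ) (hz : ∀ i, star (z i) ⬝ᵥ z i = 1)
    (J : Matrix (Fin (k - 1)) (Fin (k - 1)) ℂ)
    (hJ : J = (n : ℝ)⁻¹ • ∑ i, vecMulVec (z i) (star (z i))) :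
    (∀ w : Fin (k - 1) → ℂ, star w ⬝ᵥ w = 1 →
      ((∀ u : Fin (k - 1) → ℂ, star u ⬝ᵥ u = 1 →
          (n : ℝ)⁻¹ * ∑ i, (Matrix.trace
              ((vecMulVec u (star u) - vecMulVec (z i) (star (z i))) *
               (vecMulVec u (star u) - vecMulVec (z i) (star (z i)))ᴴ)).re
            ≤ (n : ℝ)⁻¹ * ∑ i, (Matrix.trace
              ((vecMulVec w (star w) - vecMulVec (z i) (star (z i))) *
               (vecMulVec w (star w) - vecMulVec (z i) (star (z i)))ᴴ)).re) ↔
        (∃ lam : ℝ, J *ᵥ w = (lam : ℂ) • w ∧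
          ∀ (c : ℝ) (v : Fin (k - 1) → ℂ), v ≠ 0 → J *ᵥ v = (c : ℂ) • v → lam ≤ c))) ∧
    (∀ (lam : ℝ) (mv : Fin (k - 1) → ℂ), star mv ⬝ᵥ mv = 1 →
      J *ᵥ mv = (lam : ℂ) • mv →
      (∀ (c : ℝ) (v : Fin (k - 1) → ℂ), v ≠ 0 → J *ᵥ v = (c : ℂ) • v → lam ≤ c) →
      (∀ v : Fin (k - 1) → ℂ, J *ᵥ v = (lam : ℂ) • v → ∃ c : ℂ, v = c • mv) →
      {w : Fin (k - 1) → ℂ | star w ⬝ᵥ w = 1 ∧ ∀ u : Fin (k - 1) → ℂ, star u ⬝ᵥ u = 1 →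
          (n : ℝ)⁻¹ * ∑ i, (Matrix.trace
              ((vecMulVec u (star u) - vecMulVec (z i) (star (z i))) *
               (vecMulVec u (star u) - vecMulVec (z i) (star (z i)))ᴴ)).re
            ≤ (n : ℝ)⁻¹ * ∑ i, (Matrix.trace
              ((vecMulVec w (star w) - vecMulVec (z i) (star (z i))) *
               (vecMulVec w (star w) - vecMulVec (z i) (star (z i)))ᴴ)).re}
        = {w : Fin (k - 1) → ℂ | ∃ ζ : ℂ, ‖ζ‖ = 1 ∧ w = ζ • mv}) := by
  have hd : 0 < k - 1 := by omega
  have hn' : (n : ℝ) ≠ 0 := Nat.cast_ne_zero.mpr hn.ne'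
  -- J is Hermitian
  have hJh : J.IsHermitian := by
    rw [hJ]
    show _ᴴ = _
    rw [Matrix.conjTranspose_smul, Matrix.conjTranspose_sum]
    simp only [vmv_herm, star_trivial]
  obtain ⟨μ, e0, he0unit, he0eig, hray, heqcase⟩ := rayleigh_min hd J hJh
  have unit_ne : ∀ v : Fin (k - 1) → ℂ, star v ⬝ᵥ v = 1 → v ≠ 0 := by
    intro v hv h
    rw [h] at hv
    simp at hv
  -- quadratic form formula
  have hq : ∀ u : Fin (k - 1) → ℂ,
      (star u ⬝ᵥ (J *ᵥ u)).re = (n : ℝ)⁻¹ * ∑ i, Complex.normSq (star (z i) ⬝ᵥ u) := by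
    intro u
    rw [hJ, Matrix.smul_mulVec, sum_mulVec']
    simp only [vmv_mulVec]
    rw [dotProduct_smul, dotProduct_sum_smul']
    have : ∀ i, (star (z i) ⬝ᵥ u) * (star u ⬝ᵥ z i) = (Complex.normSq (star (z i) ⬝ᵥ u) : ℂ) := by
      intro i
      rw [Matrix.star_dotProduct u (z i), mul_comm]
      exact hzz' _
    rw [Finset.sum_congr rfl fun i _ => this i]
    rw [Complex.real_smul, Complex.re_ofReal_mul]
    congr 1
    rw [Complex.re_sum]
    exact Finset.sum_congr rfl fun i _ => Complex.ofReal_re _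
  -- Fréchet function formula
  have hF : ∀ u : Fin (k - 1) → ℂ, star u ⬝ᵥ u = 1 →
      (n : ℝ)⁻¹ * ∑ i, (Matrix.trace
          ((vecMulVec u (star u) - vecMulVec (z i) (star (z i))) *
           (vecMulVec u (star u) - vecMulVec (z i) (star (z i)))ᴴ)).re
        = 2 - 2 * (star u ⬝ᵥ (J *ᵥ u)).re := by
    intro u hu
    rw [hq u,
      Finset.sum_congr rfl fun i _ => trace_diff u (z i) hu (hz i),
      Finset.sum_sub_distrib, Finset.sum_const, Finset.card_univ, Fintype.card_fin,
      ← Finset.mul_sum]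
    field_simp
    ring
  -- minimality of μ among eigenvalues
  have hmin : ∀ (c : ℝ) (v : Fin (k - 1) → ℂ), v ≠ 0 → J *ᵥ v = (c : ℂ) • v → μ ≤ c := by
    intro c v hv hev
    have h1 := hray v
    rw [hev, dotProduct_smul, smul_eq_mul, Complex.re_ofReal_mul] at h1
    exact le_of_mul_le_mul_right h1 (re_star_dot_pos hv)
  -- quadratic form at unit eigenvector
  have hq_eig : ∀ (c : ℝ) (v : Fin (k - 1) → ℂ), star v ⬝ᵥ v = 1 →
      J *ᵥ v = (c : ℂ) • v → (star v ⬝ᵥ (J *ᵥ v)).re = c := by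
    intro c v hv hev
    rw [hev, dotProduct_smul, hv, smul_eq_mul, mul_one, Complex.ofReal_re]
  have hμe0 : (star e0 ⬝ᵥ (J *ᵥ e0)).re = μ := hq_eig μ e0 he0unit he0eig
  have he0ne : e0 ≠ 0 := unit_ne e0 he0unit
  -- key: any maximizer is an eigenvector for μ
  have hkey : ∀ w : Fin (k - 1) → ℂ, star w ⬝ᵥ w = 1 →
      (∀ u : Fin (k - 1) → ℂ, star u ⬝ᵥ u = 1 →
          (n : ℝ)⁻¹ * ∑ i, (Matrix.trace
              ((vecMulVec u (star u) - vecMulVec (z i) (star (z i))) *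
               (vecMulVec u (star u) - vecMulVec (z i) (star (z i)))ᴴ)).re
            ≤ (n : ℝ)⁻¹ * ∑ i, (Matrix.trace
              ((vecMulVec w (star w) - vecMulVec (z i) (star (z i))) *
               (vecMulVec w (star w) - vecMulVec (z i) (star (z i)))ᴴ)).re) →
      J *ᵥ w = (μ : ℂ) • w := by
    intro w hw hmax
    apply heqcase
    have h1 := hmax e0 he0unit
    rw [hF e0 he0unit, hF w hw, hμe0] at h1
    have h3 := hray w
    rw [hw, Complex.one_re, mul_one] at h3 ⊢
    linarith
  -- key: any eigenvector for the min eigenvalue is a maximizer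
  have hkey2 : ∀ (lam : ℝ) (w : Fin (k - 1) → ℂ), star w ⬝ᵥ w = 1 →
      J *ᵥ w = (lam : ℂ) • w →
      (∀ (c : ℝ) (v : Fin (k - 1) → ℂ), v ≠ 0 → J *ᵥ v = (c : ℂ) • v → lam ≤ c) →
      (∀ u : Fin (k - 1) → ℂ, star u ⬝ᵥ u = 1 →
          (n : ℝ)⁻¹ * ∑ i, (Matrix.trace
              ((vecMulVec u (star u) - vecMulVec (z i) (star (z i))) *
               (vecMulVec u (star u) - vecMulVec (z i) (star (z i)))ᴴ)).re
            ≤ (n : ℝ)⁻¹ * ∑ i, (Matrix.trace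
              ((vecMulVec w (star w) - vecMulVec (z i) (star (z i))) *
               (vecMulVec w (star w) - vecMulVec (z i) (star (z i)))ᴴ)).re) := by
    intro lam w hw hweig hlmin u hu
    rw [hF u hu, hF w hw, hq_eig lam w hw hweig]
    have h2 : lam ≤ μ := hlmin μ e0 he0ne he0eig
    have h3 := hray u
    rw [hu, Complex.one_re, mul_one] at h3
    linarith
  constructor
  · -- Part 1
    intro w hw
    constructor
    · intro hmax
      exact ⟨μ, hkey w hw hmax, hmin⟩
    · rintro ⟨lam, hweig, hlmin⟩
      exact hkey2 lam w hw hweig hlmin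
  · -- Part 2
    intro lam mv hmv hmveig hlmin hsimple
    have hmvne : mv ≠ 0 := unit_ne mv hmv
    have hlamμ : lam = μ := le_antisymm (hlmin μ e0 he0ne he0eig) (hmin lam mv hmvne hmveig)
    ext w
    simp only [Set.mem_setOf_eq]
    constructor
    · rintro ⟨hw, hmax⟩
      have hweig : J *ᵥ w = (lam : ℂ) • w := by
        rw [hlamμ]
        exact hkey w hw hmax
      obtain ⟨c, hc⟩ := hsimple w hweig
      refine ⟨c, ?_, hc⟩
      have h1 : star w ⬝ᵥ w = (Complex.normSq c : ℂ) := by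
        rw [hc, star_smul, smul_dotProduct, dotProduct_smul, hmv]
        simp only [smul_eq_mul, mul_one]
        exact hzz' c
      rw [hw] at h1
      have h2 : Complex.normSq c = 1 := by exact_mod_cast h1.symm
      rw [Complex.norm_def, h2, Real.sqrt_one]
    · rintro ⟨ζ, hζ, rfl⟩
      have hunit : star (ζ • mv) ⬝ᵥ (ζ • mv) = 1 := by
        rw [star_smul, smul_dotProduct, dotProduct_smul, hmv]
        simp only [smul_eq_mul, mul_one]
        rw [hzz' ζ]
        norm_cast
        rw [Complex.normSq_eq_norm_sq, hζ, one_pow]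
      refine ⟨hunit, ?_⟩
      have heig' : J *ᵥ (ζ • mv) = (lam : ℂ) • (ζ • mv) := by
        rw [Matrix.mulVec_smul, hmveig, smul_comm]
      exact hkey2 lam (ζ • mv) hunit heig' hlmin
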